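/- Let L be a finite-dimensional complex Lie algebra with a nondegenerate symmetric ℂ-bilinear form B, and let g and g̃ both be compact real forms of (L,B). Then there exists a ℂ-linear Lie algebra automorphism φ of L satisfying B(φ(x), φ(y)) = B(x,y) for all x,y ∈ L and φ(g) = g̃. In particular, g and g̃ are isomorphic as real Lie algebras via an isomorphism that is an isometry for the inner products induced by B. -/

import Mathlib

/-!
Setup: a finite-dimensional complex Lie algebra `L` with a nondegenerate symmetric
`ℂ`-bilinear form `B` (a "holomorphic inner product"), viewed also as a real Lie algebra.
-/

variable {L : Type*} [LieRing L] [LieAlgebra ℂ L]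

/-- A complex Lie algebra is in particular a real Lie algebra. -/
noncomputable instance instLieAlgebraRealOfComplex : LieAlgebra ℝ L :=
  { (inferInstance : Module ℝ L) with
    lie_smul := fun t x y => by
      rw [show t • y = (t : ℂ) • y from rfl, lie_smul,
        show (t : ℂ) • ⁅x, y⁆ = t • ⁅x, y⁆ from rfl] }

/-- `g` is a real form of the complex Lie algebra `L`:
`g ∩ i • g = {0}` and `g + i • g = L`. -/
def IsRealForm (g : LieSubalgebra ℝ L) : Prop :=
  (∀ x ∈ g, ∀ y ∈ g, x = Complex.I • y → x = 0) ∧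
  (∀ z : L, ∃ x ∈ g, ∃ y ∈ g, z = x + Complex.I • y)

/-- `g` is a real slice of `(L, B)`: a real form of `L` on which `B` is real-valued. -/
def IsRealSlice (B : LinearMap.BilinForm ℂ L) (g : LieSubalgebra ℝ L) : Prop :=
  IsRealForm g ∧ ∀ x ∈ g, ∀ y ∈ g, (B x y).im = 0

/-- A compact real form of `(L, B)`: a real slice on which `B` is positive definite. -/
def IsCompactRealForm (B : LinearMap.BilinForm ℂ L) (u : LieSubalgebra ℝ L) : Prop :=
  IsRealSlice B u ∧ ∀ x ∈ u, x ≠ 0 → 0 < (B x x).re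

/-- A Cartan involution of the metric `B|g`: an `ℝ`-linear involution `θ` of `g` such that
`(x, y) ↦ B x (θ y)` is a positive-definite (real-valued, symmetric) inner product on `g`. -/
def IsCartanInvolutionOfMetric (B : LinearMap.BilinForm ℂ L) (g : LieSubalgebra ℝ L)
    (θ : ↥g →ₗ[ℝ] ↥g) : Prop :=
  (∀ x, θ (θ x) = x) ∧
  (∀ x y : ↥g, B (θ x : L) (y : L) = B (x : L) (θ y : L)) ∧
  (∀ x : ↥g, x ≠ 0 → 0 < (B (x : L) (θ x : L)).re)

/-- A Cartan involution of Lie algebras of the metric `B|g`: a Cartan involution of the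
metric which is moreover a Lie algebra automorphism of `g`. -/
def IsCartanInvolutionOfLieAlgebras (B : LinearMap.BilinForm ℂ L) (g : LieSubalgebra ℝ L)
    (θ : ↥g →ₗ[ℝ] ↥g) : Prop :=
  IsCartanInvolutionOfMetric B g θ ∧ ∀ x y : ↥g, θ ⁅x, y⁆ = ⁅θ x, θ y⁆

namespace CRFAux

open Complex

lemma rsmul_eq (r : ℝ) (x : L) : r • x = (r : ℂ) • x := rfl

lemma decomp_unique {u : LieSubalgebra ℝ L} (hu : IsRealForm u)
    {a b a' b' : L} (ha : a ∈ u) (hb : b ∈ u) (ha' : a' ∈ u) (hb' : b' ∈ u)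
    (h : a + Complex.I • b = a' + Complex.I • b') : a = a' ∧ b = b' := by
  have h1 : a - a' = Complex.I • (b' - b) := by
    rw [smul_sub]
    linear_combination (norm := module) h
  have h2 : a - a' = 0 := hu.1 _ (sub_mem ha ha') _ (sub_mem hb' hb) h1
  have h3 : a = a' := sub_eq_zero.mp h2
  refine ⟨h3, ?_⟩
  have h4 : Complex.I • (b' - b) = 0 := by rw [← h1, h2]
  have h5 : b' - b = 0 := by
    rcases smul_eq_zero.mp h4 with h | h
    · exact absurd h Complex.I_ne_zero
    · exact h
  exact (sub_eq_zero.mp h5).symm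

noncomputable def conjMap {u : LieSubalgebra ℝ L} (hu : IsRealForm u) (z : L) : L :=
  (hu.2 z).choose - Complex.I • (hu.2 z).choose_spec.2.choose

lemma conjMap_spec {u : LieSubalgebra ℝ L} (hu : IsRealForm u) (z : L) :
    ∃ a ∈ u, ∃ b ∈ u, z = a + Complex.I • b ∧ conjMap hu z = a - Complex.I • b := by
  exact ⟨(hu.2 z).choose, (hu.2 z).choose_spec.1, (hu.2 z).choose_spec.2.choose,
    (hu.2 z).choose_spec.2.choose_spec.1, (hu.2 z).choose_spec.2.choose_spec.2, rfl⟩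

lemma conjMap_apply {u : LieSubalgebra ℝ L} (hu : IsRealForm u)
    {a b : L} (ha : a ∈ u) (hb : b ∈ u) :
    conjMap hu (a + Complex.I • b) = a - Complex.I • b := by
  obtain ⟨a', ha', b', hb', hz, hc⟩ := conjMap_spec hu (a + Complex.I • b)
  obtain ⟨rfl, rfl⟩ := decomp_unique hu ha hb ha' hb' hz
  exact hc

lemma conjMap_fix {u : LieSubalgebra ℝ L} (hu : IsRealForm u) {a : L} (ha : a ∈ u) :
    conjMap hu a = a := by
  have := conjMap_apply hu ha u.zero_mem
  simpa using this

lemma conjMap_add {u : LieSubalgebra ℝ L} (hu : IsRealForm u) (x y : L) :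
    conjMap hu (x + y) = conjMap hu x + conjMap hu y := by
  obtain ⟨a, ha, b, hb, rfl, hc⟩ := conjMap_spec hu x
  obtain ⟨c, hc', d, hd, rfl, hc2⟩ := conjMap_spec hu y
  have key : (a + Complex.I • b) + (c + Complex.I • d) = (a + c) + Complex.I • (b + d) := by
    rw [smul_add]; module
  rw [key, conjMap_apply hu (add_mem ha hc') (add_mem hb hd), hc, hc2, smul_add]
  module

lemma conjMap_smul {u : LieSubalgebra ℝ L} (hu : IsRealForm u) (c : ℂ) (x : L) :
    conjMap hu (c • x) = (starRingEnd ℂ) c • conjMap hu x := by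
  obtain ⟨a, ha, b, hb, rfl, hc⟩ := conjMap_spec hu x
  have key : c • (a + Complex.I • b) =
      (c.re • a - c.im • b) + Complex.I • ((c.im • a + c.re • b) : L) := by
    show _ = ((c.re : ℂ) • a - (c.im : ℂ) • b) + Complex.I • (((c.im : ℂ) • a + (c.re : ℂ) • b) : L)
    match_scalars <;> simp [Complex.ext_iff]
  rw [key, conjMap_apply hu (sub_mem (u.smul_mem _ ha) (u.smul_mem _ hb))
    (add_mem (u.smul_mem _ ha) (u.smul_mem _ hb)), hc]
  show ((c.re : ℂ) • a - (c.im : ℂ) • b) - Complex.I • (((c.im : ℂ) • a + (c.re : ℂ) • b) : L) = _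
  match_scalars <;> simp [Complex.ext_iff] <;> ring

lemma conjMap_conjMap {u : LieSubalgebra ℝ L} (hu : IsRealForm u) (x : L) :
    conjMap hu (conjMap hu x) = x := by
  obtain ⟨a, ha, b, hb, rfl, hc⟩ := conjMap_spec hu x
  rw [hc, show a - Complex.I • b = a + Complex.I • (-b) by module,
    conjMap_apply hu ha (neg_mem hb)]
  module

lemma conjMap_lie {u : LieSubalgebra ℝ L} (hu : IsRealForm u) (x y : L) :
    conjMap hu ⁅x, y⁆ = ⁅conjMap hu x, conjMap hu y⁆ := by
  obtain ⟨a, ha, b, hb, rfl, hc⟩ := conjMap_spec hu x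
  obtain ⟨c, hcm, d, hd, rfl, hc2⟩ := conjMap_spec hu y
  have habcd : ∀ s t : ℂ, ⁅a + s • b, c + t • d⁆ =
      ⁅a, c⁆ + t • ⁅a, d⁆ + s • ⁅b, c⁆ + (s * t) • ⁅b, d⁆ := by
    intro s t
    simp only [add_lie, lie_add, lie_smul, smul_lie, smul_smul]
    module
  have hmem : ∀ {p q : L}, p ∈ u → q ∈ u → ⁅p, q⁆ ∈ u := fun hp hq => u.lie_mem hp hq
  have key : ⁅a + Complex.I • b, c + Complex.I • d⁆ =
      (⁅a, c⁆ - ⁅b, d⁆) + Complex.I • (⁅a, d⁆ + ⁅b, c⁆) := by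
    rw [habcd, Complex.I_mul_I, smul_add]
    match_scalars <;> simp [Complex.ext_iff]
  rw [key, conjMap_apply hu (sub_mem (hmem ha hcm) (hmem hb hd))
    (add_mem (hmem ha hd) (hmem hb hcm)), hc, hc2,
    show a - Complex.I • b = a + (-Complex.I) • b by module,
    show c - Complex.I • d = c + (-Complex.I) • d by module, habcd]
  match_scalars <;> simp [Complex.ext_iff]

lemma mem_iff_conjMap_eq {u : LieSubalgebra ℝ L} (hu : IsRealForm u) (x : L) :
    x ∈ u ↔ conjMap hu x = x := by
  constructor
  · exact fun h => conjMap_fix hu h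
  · intro h
    obtain ⟨a, ha, b, hb, rfl, hc⟩ := conjMap_spec hu x
    rw [hc] at h
    have hb0 : Complex.I • b = 0 := by
      have : (2 : ℂ) • (Complex.I • b) = 0 := by
        have := sub_eq_zero.mpr h
        linear_combination (norm := module) -this
      rcases smul_eq_zero.mp this with h2 | h2
      · norm_num at h2
      · exact h2
    rw [hb0, add_zero]
    exact ha

section BForm

variable (B : LinearMap.BilinForm ℂ L)

lemma B_expand (s t : ℂ) (a b c d : L) :
    B (a + s • b) (c + t • d) = B a c + t * B a d + s * B b c + s * t * B b d := by
  simp only [map_add, map_smul, LinearMap.add_apply, LinearMap.smul_apply, smul_eq_mul]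
  ring

lemma conjMap_B {u : LieSubalgebra ℝ L} (hu : IsRealSlice B u) (x y : L) :
    B (conjMap hu.1 x) (conjMap hu.1 y) = (starRingEnd ℂ) (B x y) := by
  obtain ⟨a, ha, b, hb, rfl, hc⟩ := conjMap_spec hu.1 x
  obtain ⟨c, hcm, d, hd, rfl, hc2⟩ := conjMap_spec hu.1 y
  rw [hc, hc2, show a - Complex.I • b = a + (-Complex.I) • b by module,
    show c - Complex.I • d = c + (-Complex.I) • d by module, B_expand, B_expand]
  have h1 := hu.2 a ha c hcm
  have h2 := hu.2 a ha d hd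
  have h3 := hu.2 b hb c hcm
  have h4 := hu.2 b hb d hd
  simp only [map_add, map_mul, Complex.conj_I,
    Complex.conj_eq_iff_im.mpr h1, Complex.conj_eq_iff_im.mpr h2,
    Complex.conj_eq_iff_im.mpr h3, Complex.conj_eq_iff_im.mpr h4]

lemma B_nonneg_diag {u : LieSubalgebra ℝ L} (hu : IsCompactRealForm B u)
    {a : L} (ha : a ∈ u) : 0 ≤ (B a a).re := by
  rcases eq_or_ne a 0 with rfl | h
  · simp
  · exact le_of_lt (hu.2 a ha h)

lemma B_conjMap_self (hBsymm : ∀ x y : L, B x y = B y x)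
    {u : LieSubalgebra ℝ L} (hu : IsCompactRealForm B u) (x : L) :
    (B x (conjMap hu.1.1 x)).im = 0 ∧ (x ≠ 0 → 0 < (B x (conjMap hu.1.1 x)).re) := by
  obtain ⟨a, ha, b, hb, rfl, hc⟩ := conjMap_spec hu.1.1 x
  rw [hc, show a - Complex.I • b = a + (-Complex.I) • b by module, B_expand]
  have key : B a a + -Complex.I * B a b + Complex.I * B b a +
      Complex.I * -Complex.I * B b b = B a a + B b b := by
    linear_combination Complex.I * hBsymm b a - B b b * Complex.I_mul_I
  rw [key]
  constructor
  · simp [hu.1.2 a ha a ha, hu.1.2 b hb b hb]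
  · intro hx
    have hab : a ≠ 0 ∨ b ≠ 0 := by
      by_contra h
      push_neg at h
      exact hx (by rw [h.1, h.2]; simp)
    rw [Complex.add_re]
    rcases hab with h | h
    · have := hu.2 a ha h
      have := B_nonneg_diag B hu hb
      linarith
    · have hb0 : b ≠ 0 := h
      have := hu.2 b hb hb0
      have := B_nonneg_diag B hu ha
      linarith

lemma conjMap_ne_zero {u : LieSubalgebra ℝ L} (hu : IsRealForm u) {x : L} (hx : x ≠ 0) :
    conjMap hu x ≠ 0 := by
  intro h
  apply hx
  have := conjMap_conjMap hu x
  rw [h] at this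
  rw [← this, show (0 : L) = 0 + Complex.I • 0 by simp, conjMap_apply hu u.zero_mem u.zero_mem]
  simp

end BForm

/-- The conjugation bundled as a conjugate-semilinear map. -/
noncomputable def conjSL {u : LieSubalgebra ℝ L} (hu : IsRealForm u) :
    L →ₛₗ[starRingEnd ℂ] L where
  toFun := conjMap hu
  map_add' := conjMap_add hu
  map_smul' := conjMap_smul hu

@[simp] lemma conjSL_apply {u : LieSubalgebra ℝ L} (hu : IsRealForm u) (x : L) :
    conjSL hu x = conjMap hu x := rfl

end CRFAux

open CRFAux

/-- Any two compact real forms of `(L, B)` are related by a `ℂ`-linear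
Lie algebra automorphism of `L` preserving `B`; in particular they are isomorphic as real
Lie algebras via a `B`-isometry. -/
theorem compactRealForms_conjugate [FiniteDimensional ℂ L]
    (B : LinearMap.BilinForm ℂ L) (hBsymm : ∀ x y : L, B x y = B y x)
    (hBnd : B.Nondegenerate) (g g' : LieSubalgebra ℝ L)
    (hg : IsCompactRealForm B g) (hg' : IsCompactRealForm B g') :
    ∃ φ : L ≃ₗ⁅ℂ⁆ L, (∀ x y : L, B (φ x) (φ y) = B x y) ∧
      ⇑φ '' (g : Set L) = (g' : Set L) := by
  classical
  have hgRF : IsRealForm g := hg.1.1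
  have hgRF' : IsRealForm g' := hg'.1.1
  have hBs : ∀ x y, B (conjMap hgRF x) (conjMap hgRF y) = (starRingEnd ℂ) (B x y) :=
    conjMap_B B hg.1
  have hBt : ∀ x y, B (conjMap hgRF' x) (conjMap hgRF' y) = (starRingEnd ℂ) (B x y) :=
    conjMap_B B hg'.1
  have hposs := B_conjMap_self B hBsymm hg
  have hpost := B_conjMap_self B hBsymm hg'
  have hzero : conjMap hgRF (0 : L) = 0 := conjMap_fix hgRF g.zero_mem
  -- the hermitian inner product ⟪x, y⟫ = B (σ x) y
  letI core : InnerProductSpace.Core ℂ L :=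
  { inner := fun x y => B (conjMap hgRF x) y
    conj_inner_symm := by
      intro x y
      calc (starRingEnd ℂ) (B (conjMap hgRF y) x)
          = B (conjMap hgRF (conjMap hgRF y)) (conjMap hgRF x) := (hBs _ _).symm
        _ = B y (conjMap hgRF x) := by rw [conjMap_conjMap]
        _ = B (conjMap hgRF x) y := hBsymm _ _
    re_inner_nonneg := by
      intro x
      show 0 ≤ RCLike.re ((B (conjMap hgRF x)) x)
      rw [RCLike.re_to_complex, hBsymm]
      rcases eq_or_ne x 0 with rfl | h
      · simp [hzero]
      · exact le_of_lt ((hposs x).2 h)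
    add_left := by
      intro x y z
      show B (conjMap hgRF (x + y)) z = B (conjMap hgRF x) z + B (conjMap hgRF y) z
      rw [conjMap_add, map_add, LinearMap.add_apply]
    smul_left := by
      intro x y r
      show B (conjMap hgRF (r • x)) y = (starRingEnd ℂ) r * B (conjMap hgRF x) y
      rw [conjMap_smul, map_smul, LinearMap.smul_apply, smul_eq_mul]
    definite := by
      intro x hx
      replace hx : B (conjMap hgRF x) x = 0 := hx
      by_contra h
      have h1 := (hposs x).2 h
      rw [hBsymm] at h1
      rw [hx] at h1
      simp at h1 }
  letI : NormedAddCommGroup L := InnerProductSpace.Core.toNormedAddCommGroup (cd := core)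
  letI : InnerProductSpace ℂ L := InnerProductSpace.ofCore core.toCore
  have hinner : ∀ x y : L, (inner ℂ x y : ℂ) = B (conjMap hgRF x) y := fun _ _ => rfl
  -- the positive operator P = σ' ∘ σ
  let P : L →ₗ[ℂ] L :=
  { toFun := fun x => conjMap hgRF' (conjMap hgRF x)
    map_add' := by
      intro x y
      show conjMap hgRF' (conjMap hgRF (x + y))
        = conjMap hgRF' (conjMap hgRF x) + conjMap hgRF' (conjMap hgRF y)
      rw [conjMap_add, conjMap_add]
    map_smul' := by
      intro c x
      show conjMap hgRF' (conjMap hgRF (c • x)) = c • conjMap hgRF' (conjMap hgRF x)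
      rw [conjMap_smul, conjMap_smul]
      simp
    }
  have hPapp : ∀ x, P x = conjMap hgRF' (conjMap hgRF x) := fun _ => rfl
  have hPsymm : P.IsSymmetric := by
    intro x y
    rw [hinner, hinner, hPapp, hPapp]
    calc B (conjMap hgRF (conjMap hgRF' (conjMap hgRF x))) y
        = B (conjMap hgRF (conjMap hgRF' (conjMap hgRF x)))
            (conjMap hgRF (conjMap hgRF y)) := by rw [conjMap_conjMap]
      _ = (starRingEnd ℂ) (B (conjMap hgRF' (conjMap hgRF x)) (conjMap hgRF y)) := hBs _ _
      _ = (starRingEnd ℂ) (B (conjMap hgRF' (conjMap hgRF x))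
            (conjMap hgRF' (conjMap hgRF' (conjMap hgRF y)))) := by rw [conjMap_conjMap]
      _ = (starRingEnd ℂ) ((starRingEnd ℂ)
            (B (conjMap hgRF x) (conjMap hgRF' (conjMap hgRF y)))) := by rw [hBt]
      _ = B (conjMap hgRF x) (conjMap hgRF' (conjMap hgRF y)) := Complex.conj_conj _
  have hdim : Module.finrank ℂ L = Module.finrank ℂ L := rfl
  set n := Module.finrank ℂ L with hnd
  let b0 := hPsymm.eigenvectorBasis hdim
  let ev := hPsymm.eigenvalues hdim
  have hEig : ∀ i, P (b0 i) = (ev i : ℂ) • b0 i := fun i =>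
    hPsymm.apply_eigenvectorBasis hdim i
  have hPpos : ∀ x : L, x ≠ 0 → 0 < (B (conjMap hgRF x) (P x)).re := by
    intro x hx
    rw [hPapp]
    rw [hBsymm]
    rw [show B (conjMap hgRF' (conjMap hgRF x)) (conjMap hgRF x)
      = B (conjMap hgRF x) (conjMap hgRF' (conjMap hgRF x)) from hBsymm _ _]
    exact (hpost (conjMap hgRF x)).2 (conjMap_ne_zero hgRF hx)
  have hevpos : ∀ i, 0 < ev i := by
    intro i
    have hb0ne : b0 i ≠ 0 := by
      intro h
      have := b0.orthonormal.1 i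
      rw [h] at this
      simp at this
    have h1 : (inner ℂ (b0 i) (P (b0 i)) : ℂ) = (ev i : ℂ) * inner ℂ (b0 i) (b0 i) := by
      rw [hEig, inner_smul_right]
    have h2 : (inner ℂ (b0 i) (b0 i) : ℂ) = 1 := by
      rw [inner_self_eq_norm_sq_to_K, b0.orthonormal.1 i]
      norm_num
    have h3 : 0 < (inner ℂ (b0 i) (P (b0 i)) : ℂ).re := by
      rw [hinner]
      exact hPpos (b0 i) hb0ne
    rw [h1, h2, mul_one] at h3
    simpa using h3
  let b := b0.toBasis
  have hbeq : ∀ i, (b i : L) = b0 i := fun i => by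
    simp [b, OrthonormalBasis.coe_toBasis]
  have hEigb : ∀ i, P (b i) = (ev i : ℂ) • b i := fun i => by rw [hbeq]; exact hEig i
  -- the square root of P
  let sq : Fin n → ℂ := fun i => (Real.sqrt (ev i) : ℂ)
  have hsqre : ∀ i, sq i = (Real.sqrt (ev i) : ℂ) := fun _ => rfl
  have hsqne : ∀ i, sq i ≠ 0 := fun i => by
    rw [hsqre]
    simp only [ne_eq, Complex.ofReal_eq_zero]
    exact (Real.sqrt_pos.mpr (hevpos i)).ne'
  let φ0 : L →ₗ[ℂ] L := b.constr ℂ fun i => sq i • b i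
  let ψ0 : L →ₗ[ℂ] L := b.constr ℂ fun i => (sq i)⁻¹ • b i
  have hφ0b : ∀ i, φ0 (b i) = sq i • b i := fun i => b.constr_basis ℂ _ i
  have hψ0b : ∀ i, ψ0 (b i) = (sq i)⁻¹ • b i := fun i => b.constr_basis ℂ _ i
  have hφψ : φ0 ∘ₗ ψ0 = LinearMap.id := b.ext fun i => by
    simp [LinearMap.comp_apply, hψ0b, map_smul, hφ0b, smul_smul,
      inv_mul_cancel₀ (hsqne i)]
  have hψφ : ψ0 ∘ₗ φ0 = LinearMap.id := b.ext fun i => by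
    simp [LinearMap.comp_apply, hψ0b, map_smul, hφ0b, smul_smul,
      mul_inv_cancel₀ (hsqne i)]
  let e : L ≃ₗ[ℂ] L := LinearEquiv.ofLinear φ0 ψ0 hφψ hψφ
  have he : ∀ x, e x = φ0 x := fun _ => rfl
  -- scaling on eigenvectors
  have hscal : ∀ (μ : ℝ) (v : L), P v = (μ : ℂ) • v → φ0 v = (Real.sqrt μ : ℂ) • v := by
    intro μ v hv
    have hco : ∀ i, sq i * b.repr v i = (Real.sqrt μ : ℂ) * b.repr v i := by
      intro i
      rcases eq_or_ne (b.repr v i) 0 with h | h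
      · rw [h, mul_zero, mul_zero]
      · have h1 : b0.repr (P v) i = (ev i : ℂ) * b0.repr v i :=
          hPsymm.eigenvectorBasis_apply_self_apply hdim v i
        have h2 : b.repr (P v) i = (ev i : ℂ) * b.repr v i := by
          rw [OrthonormalBasis.coe_toBasis_repr_apply, OrthonormalBasis.coe_toBasis_repr_apply]
          exact h1
        have h3 : b.repr (P v) i = (μ : ℂ) * b.repr v i := by
          rw [hv, map_smul]
          simp
        have h4 : (ev i : ℂ) = (μ : ℂ) := by
          have h5 := h2.symm.trans h3
          exact mul_right_cancel₀ h h5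
        have h6 : ev i = μ := by exact_mod_cast h4
        rw [hsqre, h6]
    calc φ0 v = ∑ i, b.repr v i • (sq i • b i) := by
          rw [Module.Basis.constr_apply_fintype]
          refine Finset.sum_congr rfl fun i _ => ?_
          rw [Module.Basis.equivFun_apply]
      _ = ∑ i, ((Real.sqrt μ : ℂ) * b.repr v i) • b i := by
          refine Finset.sum_congr rfl fun i _ => ?_
          rw [smul_smul, mul_comm (b.repr v i) (sq i), hco i]
      _ = (Real.sqrt μ : ℂ) • ∑ i, b.repr v i • b i := by
          rw [Finset.smul_sum]
          refine Finset.sum_congr rfl fun i _ => ?_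
          rw [smul_smul]
      _ = (Real.sqrt μ : ℂ) • v := by rw [Module.Basis.sum_repr]
  -- φ0 is a Lie algebra morphism
  have hPlie : ∀ x y : L, P ⁅x, y⁆ = ⁅P x, P y⁆ := by
    intro x y
    rw [hPapp, hPapp, hPapp, conjMap_lie, conjMap_lie]
  have hbb2 : ∀ i j, φ0 ⁅b i, b j⁆ = ⁅φ0 (b i), φ0 (b j)⁆ := by
    intro i j
    have h1 : P ⁅b i, b j⁆ = ((ev i * ev j : ℝ) : ℂ) • ⁅b i, b j⁆ := by
      rw [hPlie, hEigb, hEigb, smul_lie, lie_smul, smul_smul]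
      push_cast
      ring_nf
    have h2 := hscal (ev i * ev j) _ h1
    rw [h2, hφ0b, hφ0b, smul_lie, lie_smul, smul_smul, hsqre, hsqre]
    rw [Real.sqrt_mul (hevpos i).le]
    push_cast
    ring_nf
  have hlie1 : ∀ i (y : L), φ0 ⁅b i, y⁆ = ⁅φ0 (b i), φ0 y⁆ := by
    intro i
    have heq : φ0 ∘ₗ (LieAlgebra.ad ℂ L (b i) : L →ₗ[ℂ] L)
        = (LieAlgebra.ad ℂ L (φ0 (b i)) : L →ₗ[ℂ] L) ∘ₗ φ0 :=
      b.ext fun j => by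
        simpa [LieAlgebra.ad_apply] using hbb2 i j
    intro y
    simpa [LieAlgebra.ad_apply] using DFunLike.congr_fun heq y
  have hlie : ∀ x y : L, φ0 ⁅x, y⁆ = ⁅φ0 x, φ0 y⁆ := by
    intro x
    have heq : φ0 ∘ₗ (LieAlgebra.ad ℂ L x : L →ₗ[ℂ] L)
        = (LieAlgebra.ad ℂ L (φ0 x) : L →ₗ[ℂ] L) ∘ₗ φ0 :=
      b.ext fun j => by
        simp only [LinearMap.comp_apply, LieAlgebra.ad_apply]
        rw [← lie_skew x (b j), ← lie_skew (φ0 x) (φ0 (b j)), map_neg, hlie1 j x]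
    intro y
    simpa [LieAlgebra.ad_apply] using DFunLike.congr_fun heq y
  -- φ0 preserves B
  have hBP : ∀ x y, B (P x) (P y) = B x y := by
    intro x y
    rw [hPapp, hPapp, hBt, hBs, Complex.conj_conj]
  have hBbb : ∀ i j, B (φ0 (b i)) (φ0 (b j)) = B (b i) (b j) := by
    intro i j
    have hgen : B (φ0 (b i)) (φ0 (b j)) = (sq i * sq j) * B (b i) (b j) := by
      rw [hφ0b, hφ0b, map_smul, map_smul]
      simp only [LinearMap.smul_apply, smul_eq_mul]
      ring
    rcases eq_or_ne (ev i * ev j) 1 with h | h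
    · have hsq1 : sq i * sq j = 1 := by
        rw [hsqre, hsqre, ← Complex.ofReal_mul, ← Real.sqrt_mul (hevpos i).le, h,
          Real.sqrt_one, Complex.ofReal_one]
      rw [hgen, hsq1, one_mul]
    · have h0 : B (b i) (b j) = 0 := by
        have h1 := hBP (b i) (b j)
        rw [hEigb, hEigb, map_smul, map_smul] at h1
        simp only [LinearMap.smul_apply, smul_eq_mul] at h1
        by_contra hne
        apply h
        have h2 : ((ev i : ℂ) * (ev j : ℂ)) * B (b i) (b j) = 1 * B (b i) (b j) := by
          rw [one_mul]
          linear_combination h1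
        have h3 : (ev i : ℂ) * (ev j : ℂ) = 1 := mul_right_cancel₀ hne h2
        exact_mod_cast h3
      rw [hgen, h0, mul_zero]
  have hBφ : ∀ x y, B (φ0 x) (φ0 y) = B x y := by
    have heq : B.compl₁₂ φ0 φ0 = B := by
      refine b.ext fun i => b.ext fun j => ?_
      simpa [LinearMap.compl₁₂_apply] using hBbb i j
    intro x y
    have h1 := DFunLike.congr_fun (DFunLike.congr_fun heq x) y
    simpa [LinearMap.compl₁₂_apply] using h1
  -- φ0 intertwines the two conjugations
  have hστb : ∀ i, φ0 (conjMap hgRF (b i)) = conjMap hgRF' (φ0 (b i)) := by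
    intro i
    have h1 : conjMap hgRF (b i) = (ev i : ℂ) • conjMap hgRF' (b i) := by
      have h0 := congrArg (conjMap hgRF') (hEigb i)
      rw [hPapp, conjMap_conjMap, conjMap_smul] at h0
      simpa [Complex.conj_ofReal] using h0
    have h2 : P (conjMap hgRF (b i)) = (((ev i)⁻¹ : ℝ) : ℂ) • conjMap hgRF (b i) := by
      rw [hPapp, conjMap_conjMap, h1, smul_smul]
      push_cast
      rw [inv_mul_cancel₀ (by exact_mod_cast (hevpos i).ne')]
      rw [one_smul]
    have h3 := hscal ((ev i)⁻¹) _ h2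
    rw [h3, hφ0b, conjMap_smul, h1, smul_smul]
    congr 1
    rw [hsqre, Complex.conj_ofReal]
    norm_cast
    rw [Real.sqrt_inv, inv_mul_eq_iff_eq_mul₀ (Real.sqrt_ne_zero'.mpr (hevpos i))]
    exact (Real.mul_self_sqrt (hevpos i).le).symm
  have hcomm : ∀ x, φ0 (conjMap hgRF x) = conjMap hgRF' (φ0 x) := by
    have heq : (φ0.comp (conjSL hgRF) : L →ₛₗ[starRingEnd ℂ] L)
        = ((conjSL hgRF').comp φ0 : L →ₛₗ[starRingEnd ℂ] L) :=
      b.ext fun i => by simpa using hστb i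
    intro x
    simpa using DFunLike.congr_fun heq x
  -- membership transfer
  have hmemiff : ∀ x : L, φ0 x ∈ g' ↔ x ∈ g := by
    intro x
    rw [mem_iff_conjMap_eq hgRF', mem_iff_conjMap_eq hgRF, ← hcomm]
    constructor
    · intro h
      have hinj : Function.Injective φ0 := by
        intro p q hpq
        have := congrArg ψ0 hpq
        have hp := DFunLike.congr_fun hψφ p
        have hq := DFunLike.congr_fun hψφ q
        simp only [LinearMap.comp_apply, LinearMap.id_apply] at hp hq
        rw [hp, hq] at this
        exact this
      exact hinj h
    · intro h
      rw [h]
  -- conclusion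
  refine ⟨{ toLinearMap := φ0, map_lie' := fun {x y} => hlie x y,
            invFun := e.symm, left_inv := e.left_inv, right_inv := e.right_inv }, ?_, ?_⟩
  · intro x y
    exact hBφ x y
  · ext y
    constructor
    · rintro ⟨x, hx, rfl⟩
      exact (hmemiff x).mpr hx
    · intro hy
      refine ⟨e.symm y, ?_, ?_⟩
      · have h1 : φ0 (e.symm y) = y := e.apply_symm_apply y
        have := (hmemiff (e.symm y)).mp (by rw [h1]; exact hy)
        exact this
      · exact e.apply_symm_apply y
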